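/- For the factorization A = Γ_1 D̄ Γ_2 with Γ_1, Γ_2 unitary and D̄ diagonal: A is invertible if and only if every diagonal entry of D̄ is nonzero, i.e., iff λ(r) = Σ_{m=0}^{M−1} g[mN + (r mod N)] e^{−2πi m ⌊r/N⌋/M} ≠ 0 for all 0 ≤ r ≤ MN−1. -/

import Mathlib

open Matrix Complex BigOperators

noncomputable section

namespace GFDM

variable {M N : ℕ}

lemma left_pos (i : Fin (M * N)) : 0 < M := by
  rcases Nat.eq_zero_or_pos M with h | h
  · subst h; exact absurd i.isLt (by simp)
  · exact h

lemma right_pos (i : Fin (M * N)) : 0 < N := by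
  rcases Nat.eq_zero_or_pos N with h | h
  · subst h; exact absurd i.isLt (by simp)
  · exact h

/-- block index when splitting `Fin (M*N)` into `M` blocks of length `N` -/
def divN (i : Fin (M * N)) : Fin M :=
  ⟨(i : ℕ) / N, Nat.div_lt_of_lt_mul (Nat.lt_of_lt_of_le i.isLt (Nat.le_of_eq (Nat.mul_comm M N)))⟩

def modN (i : Fin (M * N)) : Fin N :=
  ⟨(i : ℕ) % N, Nat.mod_lt _ (right_pos i)⟩

/-- block index when splitting `Fin (M*N)` into `N` blocks of length `M` -/
def divM (i : Fin (M * N)) : Fin N :=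
  ⟨(i : ℕ) / M, Nat.div_lt_of_lt_mul i.isLt⟩

def modM (i : Fin (M * N)) : Fin M :=
  ⟨(i : ℕ) % M, Nat.mod_lt _ (left_pos i)⟩

/-- normalized `K`-point IDFT matrix, entries `(1/√K) e^{2πi jk/K}` -/
def W (K : ℕ) : Matrix (Fin K) (Fin K) ℂ :=
  fun j k => ((1 / Real.sqrt K : ℝ) : ℂ) *
    Complex.exp (2 * Real.pi * Complex.I * ((j : ℕ) : ℂ) * ((k : ℕ) : ℂ) / (K : ℂ))

/-- the perfect-shuffle permutation matrix `P` with `p_{l,q} = 1` iff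
`q = (l mod M)·N + ⌊l/M⌋` -/
def P (M N : ℕ) : Matrix (Fin (M * N)) (Fin (M * N)) ℂ :=
  fun l q => if (q : ℕ) = ((l : ℕ) % M) * N + (l : ℕ) / M then 1 else 0

lemma shuffle_lt (l : Fin (M * N)) : ((l : ℕ) % M) * N + (l : ℕ) / M < M * N := by
  have h1 : (l : ℕ) % M < M := Nat.mod_lt _ (left_pos l)
  have h2 : (l : ℕ) / M < N := Nat.div_lt_of_lt_mul l.isLt
  calc ((l : ℕ) % M) * N + (l : ℕ) / M < ((l : ℕ) % M) * N + N := Nat.add_lt_add_left h2 _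
    _ = ((l : ℕ) % M + 1) * N := by ring
    _ ≤ M * N := Nat.mul_le_mul_right _ h1

lemma shuffle'_lt (i : Fin (M * N)) : ((i : ℕ) % N) * M + (i : ℕ) / N < M * N := by
  have h1 : (i : ℕ) % N < N := Nat.mod_lt _ (right_pos i)
  have h2 : (i : ℕ) / N < M := Nat.div_lt_of_lt_mul (Nat.lt_of_lt_of_le i.isLt (Nat.le_of_eq (Nat.mul_comm M N)))
  calc ((i : ℕ) % N) * M + (i : ℕ) / N < ((i : ℕ) % N) * M + M := Nat.add_lt_add_left h2 _
    _ = ((i : ℕ) % N + 1) * M := by ring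
    _ ≤ N * M := Nat.mul_le_mul_right _ h1
    _ = M * N := Nat.mul_comm N M

/-- the index map `l ↦ (l mod M)·N + ⌊l/M⌋` underlying `P` -/
def shuffle (l : Fin (M * N)) : Fin (M * N) :=
  ⟨((l : ℕ) % M) * N + (l : ℕ) / M, shuffle_lt l⟩

/-- the index map `i ↦ (i mod N)·M + ⌊i/N⌋` underlying `Pᵀ` -/
def shuffle' (i : Fin (M * N)) : Fin (M * N) :=
  ⟨((i : ℕ) % N) * M + (i : ℕ) / N, shuffle'_lt i⟩

/-- Kronecker product `A ⊗ B` of an `M×M` and an `N×N` matrix, flattened on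
`Fin (M*N)` via `l ↔ (⌊l/N⌋, l mod N)` -/
def kron (A : Matrix (Fin M) (Fin M) ℂ) (B : Matrix (Fin N) (Fin N) ℂ) :
    Matrix (Fin (M * N)) (Fin (M * N)) ℂ :=
  fun i j => A (divN i) (divN j) * B (modN i) (modN j)

/-- Kronecker product `B ⊗ A` of an `N×N` and an `M×M` matrix, flattened on
`Fin (M*N)` via `l ↔ (⌊l/M⌋, l mod M)` -/
def kron' (B : Matrix (Fin N) (Fin N) ℂ) (A : Matrix (Fin M) (Fin M) ℂ) :
    Matrix (Fin (M * N)) (Fin (M * N)) ℂ :=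
  fun i j => B (divM i) (divM j) * A (modM i) (modM j)

/-- `U_M = I_N ⊗ W_M`, block diagonal with `N` copies of `W_M` -/
def UM (M N : ℕ) : Matrix (Fin (M * N)) (Fin (M * N)) ℂ :=
  kron' (1 : Matrix (Fin N) (Fin N) ℂ) (W M)

/-- `U_N = I_M ⊗ W_N`, block diagonal with `M` copies of `W_N` -/
def UN (M N : ℕ) : Matrix (Fin (M * N)) (Fin (M * N)) ℂ :=
  kron (1 : Matrix (Fin M) (Fin M) ℂ) (W N)

/-- `F_b = W_M ⊗ I_N` -/
def Fb (M N : ℕ) : Matrix (Fin (M * N)) (Fin (M * N)) ℂ :=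
  kron (W M) (1 : Matrix (Fin N) (Fin N) ℂ)

/-- the block circulant matrix `G` with `(i,j)`-th `N×N` block
`Ψ_{(i−j) mod M}`, `Ψ_m = diag{g[mN],…,g[mN+N−1]}` -/
def Gmat (M N : ℕ) (g : ℕ → ℂ) : Matrix (Fin (M * N)) (Fin (M * N)) ℂ :=
  fun i j =>
    if (i : ℕ) % N = (j : ℕ) % N then
      g (((((i : ℕ) / N) + M - (j : ℕ) / N) % M) * N + (i : ℕ) % N)
    else 0

/-- block diagonal matrix whose `q`-th `N×N` block is
`D_q = Σ_{m<M} ω^{−qm} Ψ_m`, `ω = e^{2πi/M}` -/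
def Dmat (M N : ℕ) (g : ℕ → ℂ) : Matrix (Fin (M * N)) (Fin (M * N)) ℂ :=
  fun i j =>
    if (i : ℕ) / N = (j : ℕ) / N then
      ∑ m ∈ Finset.range M,
        Complex.exp (-(2 * Real.pi * Complex.I * (m : ℂ) * (((i : ℕ) / N : ℕ) : ℂ)) / (M : ℂ)) *
          (if (i : ℕ) % N = (j : ℕ) % N then g (m * N + (i : ℕ) % N) else 0)
    else 0

/-- `λ(r) = Σ_{m<M} g[mN + (r mod N)] e^{−2πi m ⌊r/N⌋ / M}` -/
def lam (M N : ℕ) (g : ℕ → ℂ) (r : ℕ) : ℂ :=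
  ∑ m ∈ Finset.range M,
    g (m * N + r % N) *
      Complex.exp (-(2 * Real.pi * Complex.I * (m : ℂ) * ((r / N : ℕ) : ℂ)) / (M : ℂ))

/-- the diagonal matrix `D̄` with
`D̄(r,r) = Σ_{m<M} g[mN + ⌊r/M⌋] e^{−2πi m (r mod M)/M}` -/
def Dbar (M N : ℕ) (g : ℕ → ℂ) : Matrix (Fin (M * N)) (Fin (M * N)) ℂ :=
  Matrix.diagonal fun r : Fin (M * N) =>
    ∑ m ∈ Finset.range M,
      g (m * N + (r : ℕ) / M) *
        Complex.exp (-(2 * Real.pi * Complex.I * (m : ℂ) * (((r : ℕ) % M : ℕ) : ℂ)) / (M : ℂ))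

/-- the GFDM modulation matrix `A = G · (I_M ⊗ W_N)` -/
def Amat (M N : ℕ) (g : ℕ → ℂ) : Matrix (Fin (M * N)) (Fin (M * N)) ℂ :=
  Gmat M N g * UN M N

lemma idx_lt (m : Fin M) (k : Fin N) : (m : ℕ) * N + (k : ℕ) < M * N := by
  calc (m : ℕ) * N + (k : ℕ) < (m : ℕ) * N + N := Nat.add_lt_add_left k.isLt _
    _ = ((m : ℕ) + 1) * N := by ring
    _ ≤ M * N := Nat.mul_le_mul_right _ m.isLt

/-- flattened data index: `(m,k) ↦ mN + k` -/
def idx (m : Fin M) (k : Fin N) : Fin (M * N) :=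
  ⟨(m : ℕ) * N + (k : ℕ), idx_lt m k⟩

/-! ### Auxiliary machinery for the proof of `stmt16` -/

lemma aux_exp_two_pi_nat (n : ℕ) : Complex.exp (2*Real.pi*I*n) = 1 := by
  have := Complex.exp_int_mul_two_pi_mul_I (n : ℤ)
  rw [show ((n:ℤ):ℂ) * (2*Real.pi*I) = 2*Real.pi*I*n by push_cast; ring] at this
  exact this

/-- `exp(2πi x q / M)` depends only on `x mod M` -/
lemma aux_exp_mod (M q x : ℕ) (hM : 0 < M) :
    Complex.exp (2*Real.pi*I*x*q/M) = Complex.exp (2*Real.pi*I*(x % M : ℕ)*q/M) := by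
  have hx : (x:ℂ) = (M:ℂ)*((x/M : ℕ):ℂ) + ((x % M :ℕ):ℂ) := by
    exact_mod_cast congrArg (Nat.cast (R := ℂ)) (Nat.div_add_mod x M).symm
  have hM' : (M:ℂ) ≠ 0 := by exact_mod_cast hM.ne'
  rw [show 2*Real.pi*I*(x:ℂ)*q/M = 2*Real.pi*I*((x/M:ℕ)*q) + 2*Real.pi*I*((x%M:ℕ):ℂ)*q/M by
    rw [hx]; field_simp]
  rw [Complex.exp_add, show ((x/M:ℕ):ℂ)*((q:ℕ):ℂ) = (((x/M*q :ℕ)):ℂ) by push_cast; ring,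
    aux_exp_two_pi_nat]
  ring

set_option maxHeartbeats 1000000 in
/-- orthogonality of roots of unity -/
lemma aux_orth (K a b : ℕ) (hK : 0 < K) (ha : a < K) (hb : b < K) :
    ∑ l ∈ Finset.range K, Complex.exp (2*Real.pi*I*a*l/K) * Complex.exp (-(2*Real.pi*I*b*l)/K)
      = if a = b then (K:ℂ) else 0 := by
  have hK' : (K:ℂ) ≠ 0 := by exact_mod_cast hK.ne'
  by_cases h : a = b
  · subst h
    simp only [if_pos rfl]
    have : ∀ l ∈ Finset.range K, Complex.exp (2*Real.pi*I*a*l/K) * Complex.exp (-(2*Real.pi*I*a*l)/K) = 1 := by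
      intro l _
      rw [← Complex.exp_add, show 2*Real.pi*I*(a:ℂ)*l/K + -(2*Real.pi*I*a*l)/K = 0 by ring,
        Complex.exp_zero]
    rw [Finset.sum_congr rfl this]
    simp
  · rw [if_neg h]
    set x : ℂ := Complex.exp (2*Real.pi*I*((a:ℂ)-b)/K) with hxdef
    have hterm : ∀ l ∈ Finset.range K,
        Complex.exp (2*Real.pi*I*a*l/K) * Complex.exp (-(2*Real.pi*I*b*l)/K) = x ^ l := by
      intro l _
      rw [← Complex.exp_add, hxdef, ← Complex.exp_nat_mul]
      congr 1
      field_simp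
      ring
    rw [Finset.sum_congr rfl hterm]
    have hx1 : x ≠ 1 := by
      intro hx
      rw [hxdef, Complex.exp_eq_one_iff] at hx
      obtain ⟨n, hn⟩ := hx
      have hpi : (2*Real.pi*I : ℂ) ≠ 0 := by
        simp [Real.pi_ne_zero, Complex.I_ne_zero, Complex.ofReal_ne_zero]
      have hC : ((a:ℂ) - b) = n * K := by
        have hhn : 2*Real.pi*I*((a:ℂ)-b) = 2*Real.pi*I*((n:ℂ)*K) := by
          field_simp at hn; linear_combination (2*Real.pi*I) * hn
        exact mul_left_cancel₀ hpi hhn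
      have hz : (a:ℤ) - b = n * K := by exact_mod_cast hC
      have h1 : (a:ℤ) < K := by exact_mod_cast ha
      have h2 : (b:ℤ) < K := by exact_mod_cast hb
      have h3 : (0:ℤ) < K := by exact_mod_cast hK
      have ha0 : (0:ℤ) ≤ a := Int.natCast_nonneg a
      have hb0 : (0:ℤ) ≤ b := Int.natCast_nonneg b
      have hn0 : n = 0 := by
        rcases lt_trichotomy n 0 with hlt | heq | hgt
        · have : n ≤ -1 := by omega
          have := mul_le_mul_of_nonneg_right this (le_of_lt h3)
          simp at this
          linarith
        · exact heq
        · have : 1 ≤ n := by omega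
          have := mul_le_mul_of_nonneg_right this (le_of_lt h3)
          simp at this
          linarith
      subst hn0
      simp at hz
      have : a = b := by omega
      exact h this
    rw [geom_sum_eq hx1]
    have hxK : x ^ K = 1 := by
      have harg : (K:ℂ) * (2*Real.pi*I*((a:ℂ)-b)/K) = (((a:ℤ)-(b:ℤ) : ℤ):ℂ) * (2*Real.pi*I) := by
        push_cast; field_simp
      rw [hxdef, ← Complex.exp_nat_mul, harg]
      exact Complex.exp_int_mul_two_pi_mul_I _
    rw [hxK]
    simp

lemma aux_conj_exp (u v K : ℕ) :
    (starRingEnd ℂ) (Complex.exp (2*Real.pi*I*u*v/K)) = Complex.exp (-(2*Real.pi*I*u*v)/K) := by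
  rw [← Complex.exp_conj]
  congr 1
  simp [map_div₀, map_ofNat]

lemma aux_inv (M a b : ℕ) (ha : a < M) (hb : b < M) :
    (a + M - (a + M - b) % M) % M = b := by
  rcases le_or_gt b a with hba | hba
  · have h1 : a + M - b = M + (a - b) := by omega
    have h2 : (M + (a - b)) % M = a - b := by
      rw [Nat.add_mod_left]; exact Nat.mod_eq_of_lt (by omega)
    rw [h1, h2]
    have h3 : a + M - (a - b) = M + b := by omega
    rw [h3, Nat.add_mod_left]
    exact Nat.mod_eq_of_lt hb
  · have h1 : (a + M - b) % M = a + M - b := Nat.mod_eq_of_lt (by omega)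
    rw [h1]
    have h2 : a + M - (a + M - b) = b := by omega
    rw [h2]; exact Nat.mod_eq_of_lt hb

lemma aux_exp_split (M a b q : ℕ) (hM : 0 < M) (ha : a < M) (hb : b < M) :
    Complex.exp (2*Real.pi*I*b*q/M)
      = Complex.exp (2*Real.pi*I*a*q/M) *
        Complex.exp (-(2*Real.pi*I*(((a + M - b) % M : ℕ):ℂ)*q)/M) := by
  set m := (a + M - b) % M with hm
  have hsum : (b + m) % M = a % M := by
    have e1 : (b + m) % M = (b + (a + M - b)) % M := by
      conv_lhs => rw [Nat.add_mod]
      conv_rhs => rw [Nat.add_mod]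
      rw [hm, Nat.mod_mod_of_dvd _ dvd_rfl]
    rw [e1, show b + (a + M - b) = a + M by omega, Nat.add_mod_right]
  have key : Complex.exp (2*Real.pi*I*b*q/M) * Complex.exp (2*Real.pi*I*(m:ℕ)*q/M)
      = Complex.exp (2*Real.pi*I*a*q/M) := by
    rw [← Complex.exp_add,
      show 2*Real.pi*I*(b:ℂ)*q/M + 2*Real.pi*I*((m:ℕ):ℂ)*q/M
        = 2*Real.pi*I*(((b + m : ℕ)):ℂ)*q/M by push_cast; ring,
      aux_exp_mod M q (b + m) hM, hsum, ← aux_exp_mod M q a hM]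
  rw [show (-(2*Real.pi*I*((m:ℕ):ℂ)*q)/M) = -(2*Real.pi*I*((m:ℕ):ℂ)*q/M) by ring,
    Complex.exp_neg, eq_mul_inv_iff_mul_eq₀ (Complex.exp_ne_zero _)]
  exact key

lemma aux_circ_sum (M a q : ℕ) (hM : 0 < M) (ha : a < M) (f : ℕ → ℂ) :
    ∑ b ∈ Finset.range M, f ((a + M - b) % M) * Complex.exp (2*Real.pi*I*b*q/M)
      = ∑ m ∈ Finset.range M,
          Complex.exp (2*Real.pi*I*a*q/M) * (f m * Complex.exp (-(2*Real.pi*I*m*q)/M)) := by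
  refine Finset.sum_nbij' (i := fun b => (a + M - b) % M) (j := fun m => (a + M - m) % M)
    ?_ ?_ ?_ ?_ ?_
  · intro b hb; exact Finset.mem_range.mpr (Nat.mod_lt _ hM)
  · intro m hm; exact Finset.mem_range.mpr (Nat.mod_lt _ hM)
  · intro b hb
    exact aux_inv M a b ha (Finset.mem_range.mp hb)
  · intro m hm
    exact aux_inv M a m ha (Finset.mem_range.mp hm)
  · intro b hb
    rw [aux_exp_split M a b q hM ha (Finset.mem_range.mp hb)]
    ring

lemma idx_val (b : Fin M) (k : Fin N) : ((idx b k : Fin (M*N)) : ℕ) = (b:ℕ) * N + k := rfl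

lemma idx_div (b : Fin M) (k : Fin N) : ((idx b k : Fin (M*N)) : ℕ) / N = b := by
  have hN : 0 < N := k.pos
  rw [idx_val, mul_comm (b:ℕ) N, Nat.mul_add_div hN, Nat.div_eq_of_lt k.isLt, add_zero]

lemma idx_mod (b : Fin M) (k : Fin N) : ((idx b k : Fin (M*N)) : ℕ) % N = k := by
  rw [idx_val, mul_comm (b:ℕ) N, Nat.mul_add_mod, Nat.mod_eq_of_lt k.isLt]

lemma divN_idx (b : Fin M) (k : Fin N) : divN (idx b k) = b := Fin.ext (idx_div b k)

lemma modN_idx (b : Fin M) (k : Fin N) : modN (idx b k) = k := Fin.ext (idx_mod b k)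

/-- the equivalence `Fin M × Fin N ≃ Fin (M*N)` given by `idx` -/
def pairEquiv (M N : ℕ) : Fin M × Fin N ≃ Fin (M * N) where
  toFun p := idx p.1 p.2
  invFun i := (divN i, modN i)
  left_inv p := Prod.ext (divN_idx p.1 p.2) (modN_idx p.1 p.2)
  right_inv i := Fin.ext (by
    show (i:ℕ)/N * N + (i:ℕ)%N = (i:ℕ)
    exact Nat.div_add_mod' _ _)

lemma sum_split (f : Fin (M*N) → ℂ) :
    ∑ j, f j = ∑ b : Fin M, ∑ k : Fin N, f (idx b k) := by
  rw [← Equiv.sum_comp (pairEquiv M N) f, Fintype.sum_prod_type]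
  rfl

lemma fin_eq_iff (i j : Fin (M*N)) :
    i = j ↔ ((i:ℕ)/N = (j:ℕ)/N ∧ (i:ℕ)%N = (j:ℕ)%N) := by
  constructor
  · rintro rfl; exact ⟨rfl, rfl⟩
  · rintro ⟨h1, h2⟩
    apply Fin.ext
    calc (i:ℕ) = N * ((i:ℕ)/N) + (i:ℕ)%N := (Nat.div_add_mod (i:ℕ) N).symm
    _ = N * ((j:ℕ)/N) + (j:ℕ)%N := by rw [h1, h2]
    _ = (j:ℕ) := Nat.div_add_mod (j:ℕ) N

/-- the eigenvector matrix `V` for the block-circulant `G` -/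
def Vm (M N : ℕ) : Matrix (Fin (M * N)) (Fin (M * N)) ℂ :=
  fun i r => if (i : ℕ) % N = (r : ℕ) % N then
    Complex.exp (2*Real.pi*I*(((i:ℕ)/N : ℕ):ℂ)*(((r:ℕ)/N : ℕ):ℂ)/M) else 0

lemma W_mul_conj (K : ℕ) (a b : Fin K) :
    ∑ k : Fin K, W K a k * (starRingEnd ℂ) (W K b k) = if a = b then 1 else 0 := by
  have hK : 0 < K := a.pos
  have hK' : (K:ℂ) ≠ 0 := by exact_mod_cast hK.ne'
  have h1 : ∀ k : Fin K, W K a k * (starRingEnd ℂ) (W K b k)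
      = ((1/(K:ℝ) : ℝ):ℂ) *
        (Complex.exp (2*Real.pi*I*(a:ℕ)*((k:ℕ):ℂ)/K) * Complex.exp (-(2*Real.pi*I*(b:ℕ)*((k:ℕ):ℂ))/K)) := by
    intro k
    unfold W
    rw [_root_.map_mul, Complex.conj_ofReal, aux_conj_exp]
    rw [show ((1 / Real.sqrt K : ℝ):ℂ) * Complex.exp (2*Real.pi*I*(a:ℕ)*(k:ℕ)/K) *
          (((1 / Real.sqrt K : ℝ):ℂ) * Complex.exp (-(2*Real.pi*I*(b:ℕ)*(k:ℕ))/K))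
        = (((1 / Real.sqrt K : ℝ):ℂ) * ((1 / Real.sqrt K : ℝ):ℂ)) *
          (Complex.exp (2*Real.pi*I*(a:ℕ)*(k:ℕ)/K) * Complex.exp (-(2*Real.pi*I*(b:ℕ)*(k:ℕ))/K)) by ring]
    congr 1
    rw [← Complex.ofReal_mul]
    congr 1
    rw [div_mul_div_comm, one_mul, Real.mul_self_sqrt (Nat.cast_nonneg K)]
  rw [Fintype.sum_congr _ _ h1, ← Finset.mul_sum]
  rw [show (∑ k : Fin K, Complex.exp (2*Real.pi*I*(a:ℕ)*((k:ℕ):ℂ)/K) *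
        Complex.exp (-(2*Real.pi*I*(b:ℕ)*((k:ℕ):ℂ))/K))
      = ∑ l ∈ Finset.range K, Complex.exp (2*Real.pi*I*(a:ℕ)*(l:ℂ)/K) *
        Complex.exp (-(2*Real.pi*I*(b:ℕ)*(l:ℂ))/K) from
    Fin.sum_univ_eq_sum_range (fun l => Complex.exp (2*Real.pi*I*(a:ℕ)*(l:ℂ)/K) *
        Complex.exp (-(2*Real.pi*I*(b:ℕ)*(l:ℂ))/K)) K]
  rw [aux_orth K a b hK a.isLt b.isLt]
  by_cases hab : a = b
  · rw [if_pos (congrArg Fin.val hab), if_pos hab, ← Complex.ofReal_natCast,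
      ← Complex.ofReal_mul, one_div, inv_mul_cancel₀ (by exact_mod_cast hK.ne' : ((K:ℝ)) ≠ 0),
      Complex.ofReal_one]
  · rw [if_neg (fun hv => hab (Fin.ext hv)), if_neg hab, mul_zero]

lemma UN_unitary : UN M N * (UN M N)ᴴ = 1 := by
  ext i j
  rw [Matrix.mul_apply]
  have hterm : ∀ r, UN M N i r * (UN M N)ᴴ r j
      = UN M N i r * (starRingEnd ℂ) (UN M N j r) := by
    intro r; rw [Matrix.conjTranspose_apply]; rfl
  rw [Fintype.sum_congr _ _ hterm,
    sum_split (fun r => UN M N i r * (starRingEnd ℂ) (UN M N j r))]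
  have hterm2 : ∀ (b : Fin M) (k : Fin N),
      UN M N i (idx b k) * (starRingEnd ℂ) (UN M N j (idx b k))
      = ((if divN i = b then (1:ℂ) else 0) * (if divN j = b then (1:ℂ) else 0)) *
        (W N (modN i) k * (starRingEnd ℂ) (W N (modN j) k)) := by
    intro b k
    unfold UN kron
    rw [divN_idx, modN_idx, _root_.map_mul, Matrix.one_apply, Matrix.one_apply]
    rw [show (starRingEnd ℂ) (if divN j = b then (1:ℂ) else 0) = if divN j = b then (1:ℂ) else 0 by
      split_ifs <;> simp]
    ring
  simp only [hterm2]
  have hinner : ∀ b : Fin M,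
      (∑ k : Fin N, ((if divN i = b then (1:ℂ) else 0) * (if divN j = b then (1:ℂ) else 0)) *
        (W N (modN i) k * (starRingEnd ℂ) (W N (modN j) k)))
      = ((if divN i = b then (1:ℂ) else 0) * (if divN j = b then (1:ℂ) else 0)) *
        (if modN i = modN j then 1 else 0) := by
    intro b
    rw [← Finset.mul_sum, W_mul_conj]
  simp only [hinner]
  rw [← Finset.sum_mul]
  have hb : (∑ b : Fin M, (if divN i = b then (1:ℂ) else 0) * (if divN j = b then (1:ℂ) else 0))
      = if divN i = divN j then 1 else 0 := by
    rw [Finset.sum_congr rfl (fun b _ => show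
        (if divN i = b then (1:ℂ) else 0) * (if divN j = b then (1:ℂ) else 0)
          = if b = divN i then (if divN i = divN j then (1:ℂ) else 0) else 0 by
      by_cases hb1 : divN i = b
      · rw [if_pos hb1, one_mul, if_pos hb1.symm]
        by_cases hb2 : divN j = b
        · rw [if_pos hb2, if_pos (hb1.trans hb2.symm)]
        · rw [if_neg hb2, if_neg (fun hc => hb2 (hc.symm.trans hb1))]
      · rw [if_neg hb1, zero_mul, if_neg (fun hc => hb1 hc.symm)])]
    rw [Finset.sum_ite_eq' Finset.univ (divN i) (fun _ => if divN i = divN j then (1:ℂ) else 0)]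
    simp
  rw [hb, Matrix.one_apply]
  have heq : (i = j) ↔ (divN i = divN j ∧ modN i = modN j) := by
    rw [fin_eq_iff]
    constructor
    · rintro ⟨h1, h2⟩; exact ⟨Fin.ext h1, Fin.ext h2⟩
    · rintro ⟨h1, h2⟩; exact ⟨congrArg Fin.val h1, congrArg Fin.val h2⟩
  split_ifs with h1 h2 h3 <;> simp_all [heq]

lemma Vm_unitary : Vm M N * (Vm M N)ᴴ = (M:ℂ) • (1 : Matrix (Fin (M*N)) (Fin (M*N)) ℂ) := by
  ext i j
  have hM : 0 < M := left_pos i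
  have hN : 0 < N := right_pos i
  rw [Matrix.mul_apply]
  have hterm : ∀ r, Vm M N i r * (Vm M N)ᴴ r j
      = (if (i:ℕ) % N = (r:ℕ) % N then
          Complex.exp (2*Real.pi*I*(((i:ℕ)/N : ℕ):ℂ)*(((r:ℕ)/N : ℕ):ℂ)/M) else 0) *
        (if (j:ℕ) % N = (r:ℕ) % N then
          Complex.exp (-(2*Real.pi*I*(((j:ℕ)/N : ℕ):ℂ)*(((r:ℕ)/N : ℕ):ℂ))/M) else 0) := by
    intro r
    rw [Matrix.conjTranspose_apply]
    unfold Vm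
    congr 1
    split_ifs with h
    · exact aux_conj_exp _ _ _
    · simp
  rw [Fintype.sum_congr _ _ hterm, sum_split]
  simp only [idx_mod, idx_div]
  by_cases hij : (i:ℕ) % N = (j:ℕ) % N
  · have hsum : ∀ b : Fin M,
        (∑ k : Fin N,
          (if (i:ℕ) % N = (k:ℕ) then
            Complex.exp (2*Real.pi*I*(((i:ℕ)/N : ℕ):ℂ)*((b:ℕ):ℂ)/M) else 0) *
          (if (j:ℕ) % N = (k:ℕ) then
            Complex.exp (-(2*Real.pi*I*(((j:ℕ)/N : ℕ):ℂ)*((b:ℕ):ℂ))/M) else 0))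
        = Complex.exp (2*Real.pi*I*(((i:ℕ)/N : ℕ):ℂ)*((b:ℕ):ℂ)/M) *
          Complex.exp (-(2*Real.pi*I*(((j:ℕ)/N : ℕ):ℂ)*((b:ℕ):ℂ))/M) := by
      intro b
      rw [Finset.sum_eq_single (modN i)]
      · rw [if_pos (by simp [modN]), if_pos (by simp [modN]; omega)]
      · intro k _ hk
        rw [if_neg, zero_mul]
        intro hcontra
        exact hk (Fin.ext (by simp [modN, hcontra])).symm
      · intro h; exact absurd (Finset.mem_univ _) h
    rw [Finset.sum_congr rfl (fun b _ => hsum b)]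
    rw [show (∑ b : Fin M, Complex.exp (2*Real.pi*I*(((i:ℕ)/N : ℕ):ℂ)*((b:ℕ):ℂ)/M) *
          Complex.exp (-(2*Real.pi*I*(((j:ℕ)/N : ℕ):ℂ)*((b:ℕ):ℂ))/M))
        = ∑ l ∈ Finset.range M, Complex.exp (2*Real.pi*I*((i:ℕ)/N : ℕ)*(l:ℂ)/M) *
          Complex.exp (-(2*Real.pi*I*((j:ℕ)/N : ℕ)*(l:ℂ))/M) from
      Fin.sum_univ_eq_sum_range (fun l => Complex.exp (2*Real.pi*I*((i:ℕ)/N : ℕ)*(l:ℂ)/M) *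
          Complex.exp (-(2*Real.pi*I*((j:ℕ)/N : ℕ)*(l:ℂ))/M)) M]
    rw [aux_orth M ((i:ℕ)/N) ((j:ℕ)/N) hM
      (Nat.div_lt_of_lt_mul (Nat.lt_of_lt_of_le i.isLt (Nat.le_of_eq (Nat.mul_comm M N))))
      (Nat.div_lt_of_lt_mul (Nat.lt_of_lt_of_le j.isLt (Nat.le_of_eq (Nat.mul_comm M N))))]
    rw [Matrix.smul_apply, Matrix.one_apply]
    by_cases hdiv : (i:ℕ)/N = (j:ℕ)/N
    · rw [if_pos hdiv, if_pos ((fin_eq_iff i j).mpr ⟨hdiv, hij⟩), smul_eq_mul, mul_one]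
    · rw [if_neg hdiv, if_neg (fun he => hdiv ((fin_eq_iff i j).mp he).1), smul_zero]
  · have hzero : ∀ b : Fin M, ∀ k : Fin N,
        (if (i:ℕ) % N = (k:ℕ) then
          Complex.exp (2*Real.pi*I*(((i:ℕ)/N : ℕ):ℂ)*((b:ℕ):ℂ)/M) else 0) *
        (if (j:ℕ) % N = (k:ℕ) then
          Complex.exp (-(2*Real.pi*I*(((j:ℕ)/N : ℕ):ℂ)*((b:ℕ):ℂ))/M) else 0) = 0 := by
      intro b k
      split_ifs with h1 h2 <;> first | omega | ring
    simp only [hzero, Finset.sum_const_zero]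
    rw [Matrix.smul_apply, Matrix.one_apply, if_neg (by rw [fin_eq_iff]; omega), smul_zero]

lemma G_mul_Vm (g : ℕ → ℂ) :
    Gmat M N g * Vm M N
      = Vm M N * Matrix.diagonal (fun r : Fin (M*N) => lam M N g (r:ℕ)) := by
  ext i r
  have hM : 0 < M := left_pos i
  have hN : 0 < N := right_pos i
  rw [Matrix.mul_diagonal, Matrix.mul_apply,
    sum_split (fun j => Gmat M N g i j * Vm M N j r)]
  have hterm : ∀ (b : Fin M) (k : Fin N),
      Gmat M N g i (idx b k) * Vm M N (idx b k) r
      = (if (i:ℕ) % N = (k:ℕ) then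
          g (((((i:ℕ)/N) + M - (b:ℕ)) % M) * N + (i:ℕ) % N) else 0) *
        (if (k:ℕ) = (r:ℕ) % N then
          Complex.exp (2*Real.pi*I*((b:ℕ):ℂ)*(((r:ℕ)/N : ℕ):ℂ)/M) else 0) := by
    intro b k
    unfold Gmat Vm
    rw [idx_mod, idx_div]
  simp only [hterm]
  by_cases hir : (i:ℕ) % N = (r:ℕ) % N
  · have hsum : ∀ b : Fin M,
        (∑ k : Fin N,
          (if (i:ℕ) % N = (k:ℕ) then
            g (((((i:ℕ)/N) + M - (b:ℕ)) % M) * N + (i:ℕ) % N) else 0) *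
          (if (k:ℕ) = (r:ℕ) % N then
            Complex.exp (2*Real.pi*I*((b:ℕ):ℂ)*(((r:ℕ)/N : ℕ):ℂ)/M) else 0))
        = g (((((i:ℕ)/N) + M - (b:ℕ)) % M) * N + (i:ℕ) % N) *
          Complex.exp (2*Real.pi*I*((b:ℕ):ℂ)*(((r:ℕ)/N : ℕ):ℂ)/M) := by
      intro b
      rw [Finset.sum_eq_single (modN i)]
      · rw [if_pos (by simp [modN]), if_pos (by simp [modN]; omega)]
      · intro k _ hk
        rw [if_neg, zero_mul]
        intro hcontra
        exact hk (Fin.ext (by simp [modN, hcontra])).symm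
      · intro h; exact absurd (Finset.mem_univ _) h
    rw [Finset.sum_congr rfl (fun b _ => hsum b)]
    have hdivi : (i:ℕ)/N < M :=
      Nat.div_lt_of_lt_mul (Nat.lt_of_lt_of_le i.isLt (Nat.le_of_eq (Nat.mul_comm M N)))
    rw [show (∑ b : Fin M, g (((((i:ℕ)/N) + M - (b:ℕ)) % M) * N + (i:ℕ) % N) *
          Complex.exp (2*Real.pi*I*((b:ℕ):ℂ)*(((r:ℕ)/N : ℕ):ℂ)/M))
        = ∑ l ∈ Finset.range M, g ((((i:ℕ)/N + M - l) % M) * N + (i:ℕ) % N) *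
          Complex.exp (2*Real.pi*I*(l:ℂ)*(((r:ℕ)/N : ℕ):ℂ)/M) from
      Fin.sum_univ_eq_sum_range (fun l => g ((((i:ℕ)/N + M - l) % M) * N + (i:ℕ) % N) *
          Complex.exp (2*Real.pi*I*(l:ℂ)*(((r:ℕ)/N : ℕ):ℂ)/M)) M]
    rw [aux_circ_sum M ((i:ℕ)/N) ((r:ℕ)/N) hM hdivi
      (fun m => g (m * N + (i:ℕ) % N))]
    unfold Vm lam
    rw [if_pos hir, Finset.mul_sum]
    refine Finset.sum_congr rfl fun m hm => ?_
    rw [hir]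
  · have hzero : ∀ b : Fin M, ∀ k : Fin N,
        (if (i:ℕ) % N = (k:ℕ) then
          g (((((i:ℕ)/N) + M - (b:ℕ)) % M) * N + (i:ℕ) % N) else 0) *
        (if (k:ℕ) = (r:ℕ) % N then
          Complex.exp (2*Real.pi*I*((b:ℕ):ℂ)*(((r:ℕ)/N : ℕ):ℂ)/M) else 0) = 0 := by
      intro b k
      split_ifs with h1 h2 <;> first | omega | ring
    simp only [hzero, Finset.sum_const_zero]
    unfold Vm
    rw [if_neg hir, zero_mul]

/-- `A` is invertible iff `λ(r) ≠ 0` for all `r`. -/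
theorem stmt16 (M N : ℕ) (hM : 0 < M) (hN : 0 < N) (g : ℕ → ℂ) :
    IsUnit (Amat M N g) ↔ ∀ r : Fin (M * N), lam M N g (r : ℕ) ≠ 0 := by
  classical
  have hdetV : (Vm M N).det ≠ 0 := by
    have h := congrArg Matrix.det (Vm_unitary (M := M) (N := N))
    rw [Matrix.det_mul, Matrix.det_smul, Matrix.det_one, mul_one] at h
    intro h0
    rw [h0, zero_mul] at h
    have hne : ((M:ℂ))^(Fintype.card (Fin (M*N))) ≠ 0 :=
      pow_ne_zero _ (by exact_mod_cast hM.ne')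
    exact hne h.symm
  have hdetUN : (UN M N).det ≠ 0 := by
    have h := congrArg Matrix.det (UN_unitary (M := M) (N := N))
    rw [Matrix.det_mul, Matrix.det_one] at h
    exact left_ne_zero_of_mul_eq_one h
  have hdetG : (Gmat M N g).det = ∏ r : Fin (M*N), lam M N g (r:ℕ) := by
    have h := congrArg Matrix.det (G_mul_Vm (M := M) (N := N) g)
    rw [Matrix.det_mul, Matrix.det_mul, Matrix.det_diagonal, mul_comm ((Vm M N).det)] at h
    exact mul_right_cancel₀ hdetV h
  rw [Amat, Matrix.isUnit_iff_isUnit_det, Matrix.det_mul, isUnit_iff_ne_zero,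
    mul_ne_zero_iff, hdetG]
  constructor
  · rintro ⟨hprod, -⟩ r
    exact Finset.prod_ne_zero_iff.mp hprod r (Finset.mem_univ r)
  · intro hall
    exact ⟨Finset.prod_ne_zero_iff.mpr (fun r _ => hall r), hdetUN⟩


end GFDM
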